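/- For 0 ≤ Ω < 1, let I(y) = 1/√(Ω+(1−Ω)y³) and q = 1 + z_Λ the unique solution in (1,∞) of q·I(q) = ∫₁^q I(y) dy. Then √q ≤ k₂/√(1−Ω), where 1/k₂ = ∫₁^{9/4} dy/√(1+y³); consequently q ≤ k₂²/(1−Ω). -/

import Mathlib

theorem stmt_13 (Ω q : ℝ) (hΩ0 : 0 ≤ Ω) (hΩ1 : Ω < 1) (hq1 : 1 < q)
    (hroot : q * (1 / Real.sqrt (Ω + (1 - Ω) * q ^ 3)) =
      ∫ y in (1:ℝ)..q, 1 / Real.sqrt (Ω + (1 - Ω) * y ^ 3))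
    (k₂ : ℝ) (hk₂ : 1 / k₂ = ∫ y in (1:ℝ)..(9/4), 1 / Real.sqrt (1 + y ^ 3)) :
    Real.sqrt q ≤ k₂ / Real.sqrt (1 - Ω) ∧ q ≤ k₂ ^ 2 / (1 - Ω) := by
  have hΩpos : (0:ℝ) < 1 - Ω := by linarith
  have hq0 : (0:ℝ) < q := by linarith
  -- positivity helpers
  have hposI : ∀ y : ℝ, 1 ≤ y → 0 < Ω + (1 - Ω) * y ^ 3 := by
    intro y hy
    have hy3 : 1 ≤ y ^ 3 := one_le_pow₀ hy
    nlinarith [mul_le_mul_of_nonneg_left hy3 (by linarith : (0:ℝ) ≤ 1 - Ω)]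
  have hposJ : ∀ y : ℝ, 1 ≤ y → 0 < 1 + y ^ 3 := by
    intro y hy; nlinarith [sq_nonneg y]
  -- continuity / integrability
  have hcontI : ∀ b : ℝ, 1 ≤ b →
      IntervalIntegrable (fun y => 1 / Real.sqrt (Ω + (1 - Ω) * y ^ 3)) MeasureTheory.volume 1 b := by
    intro b hb
    apply ContinuousOn.intervalIntegrable
    apply ContinuousOn.div continuousOn_const
    · exact (Real.continuous_sqrt.comp (by continuity)).continuousOn
    · intro y hy
      rw [Set.uIcc_of_le hb] at hy
      exact ne_of_gt (Real.sqrt_pos.mpr (hposI y hy.1))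
  have hcontJ : ∀ b : ℝ, 1 ≤ b →
      IntervalIntegrable (fun y => 1 / Real.sqrt (1 + y ^ 3)) MeasureTheory.volume 1 b := by
    intro b hb
    apply ContinuousOn.intervalIntegrable
    apply ContinuousOn.div continuousOn_const
    · exact (Real.continuous_sqrt.comp (by continuity)).continuousOn
    · intro y hy
      rw [Set.uIcc_of_le hb] at hy
      exact ne_of_gt (Real.sqrt_pos.mpr (hposJ y hy.1))
  -- J ≤ I pointwise on [1,∞)
  have hJleI : ∀ y : ℝ, 1 ≤ y →
      1 / Real.sqrt (1 + y ^ 3) ≤ 1 / Real.sqrt (Ω + (1 - Ω) * y ^ 3) := by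
    intro y hy
    apply one_div_le_one_div_of_le (Real.sqrt_pos.mpr (hposI y hy))
    apply Real.sqrt_le_sqrt
    have hy3 : 1 ≤ y ^ 3 := one_le_pow₀ hy
    nlinarith [mul_nonneg hΩ0 (sub_nonneg.mpr hy3)]
  -- ∫₁^q J ≤ ∫₁^q I
  have hint1 : (∫ y in (1:ℝ)..q, 1 / Real.sqrt (1 + y ^ 3)) ≤
      ∫ y in (1:ℝ)..q, 1 / Real.sqrt (Ω + (1 - Ω) * y ^ 3) := by
    apply intervalIntegral.integral_mono_on hq1.le (hcontJ q hq1.le) (hcontI q hq1.le)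
    intro y hy; exact hJleI y hy.1
  -- q * I q ≤ 1 / (√(1-Ω) * √q)
  have hsq : Real.sqrt ((1 - Ω) * q ^ 3) = Real.sqrt (1 - Ω) * (q * Real.sqrt q) := by
    rw [Real.sqrt_mul hΩpos.le, show q ^ 3 = q ^ 2 * q by ring, Real.sqrt_mul (sq_nonneg q),
      Real.sqrt_sq hq0.le]
  have hRHS : q * (1 / Real.sqrt (Ω + (1 - Ω) * q ^ 3)) ≤ 1 / (Real.sqrt (1 - Ω) * Real.sqrt q) := by
    have h1 : Real.sqrt ((1 - Ω) * q ^ 3) ≤ Real.sqrt (Ω + (1 - Ω) * q ^ 3) := by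
      apply Real.sqrt_le_sqrt; linarith
    have h2 : 0 < Real.sqrt ((1 - Ω) * q ^ 3) := by
      rw [hsq]; positivity
    have h3 : q * (1 / Real.sqrt (Ω + (1 - Ω) * q ^ 3)) ≤ q * (1 / Real.sqrt ((1 - Ω) * q ^ 3)) := by
      apply mul_le_mul_of_nonneg_left (one_div_le_one_div_of_le h2 h1) hq0.le
    refine h3.trans (le_of_eq ?_)
    rw [hsq]
    have hsq0 : (0:ℝ) < Real.sqrt q := Real.sqrt_pos.mpr hq0
    have hs10 : (0:ℝ) < Real.sqrt (1 - Ω) := Real.sqrt_pos.mpr hΩpos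
    field_simp
  have hchain : (∫ y in (1:ℝ)..q, 1 / Real.sqrt (1 + y ^ 3)) ≤
      1 / (Real.sqrt (1 - Ω) * Real.sqrt q) := by
    calc (∫ y in (1:ℝ)..q, 1 / Real.sqrt (1 + y ^ 3))
        ≤ ∫ y in (1:ℝ)..q, 1 / Real.sqrt (Ω + (1 - Ω) * y ^ 3) := hint1
      _ = q * (1 / Real.sqrt (Ω + (1 - Ω) * q ^ 3)) := hroot.symm
      _ ≤ 1 / (Real.sqrt (1 - Ω) * Real.sqrt q) := hRHS
  -- 1/k₂ > 0 hence k₂ > 0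
  have hk₂pos' : (0:ℝ) < 1 / k₂ := by
    rw [hk₂]
    apply intervalIntegral.intervalIntegral_pos_of_pos_on (hcontJ (9/4) (by norm_num))
    · intro y hy
      exact one_div_pos.mpr (Real.sqrt_pos.mpr (hposJ y hy.1.le))
    · norm_num
  have hk₂pos : (0:ℝ) < k₂ := one_div_pos.mp hk₂pos'
  have hs10 : (0:ℝ) < Real.sqrt (1 - Ω) := Real.sqrt_pos.mpr hΩpos
  have hsq0 : (0:ℝ) < Real.sqrt q := Real.sqrt_pos.mpr hq0
  have main : Real.sqrt q ≤ k₂ / Real.sqrt (1 - Ω) := by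
    rcases le_or_gt (9/4 : ℝ) q with hcase | hcase
    · -- q ≥ 9/4 : 1/k₂ = ∫₁^{9/4} J ≤ ∫₁^q J ≤ 1/(√(1-Ω)√q)
      have hsub : (∫ y in (1:ℝ)..(9/4), 1 / Real.sqrt (1 + y ^ 3)) ≤
          ∫ y in (1:ℝ)..q, 1 / Real.sqrt (1 + y ^ 3) := by
        apply intervalIntegral.integral_mono_interval le_rfl (by norm_num) hcase
        · filter_upwards with y using div_nonneg (by norm_num) (Real.sqrt_nonneg _)
        · exact hcontJ q hq1.le
      have h1 : 1 / k₂ ≤ 1 / (Real.sqrt (1 - Ω) * Real.sqrt q) := by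
        rw [hk₂]; exact hsub.trans hchain
      have h2 : Real.sqrt (1 - Ω) * Real.sqrt q ≤ k₂ := by
        have hx : (0:ℝ) < Real.sqrt (1 - Ω) * Real.sqrt q := by positivity
        rw [div_le_div_iff₀ hk₂pos hx] at h1
        linarith [h1]
      rw [le_div_iff₀ hs10]
      linarith [h2]
    · -- q < 9/4 : √q < 3/2 ≤ k₂ ≤ k₂/√(1-Ω)
      have hJle : (∫ y in (1:ℝ)..(9/4), 1 / Real.sqrt (1 + y ^ 3)) ≤
          ∫ y in (1:ℝ)..(9/4), y ^ (-(3:ℝ)/2) := by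
        apply intervalIntegral.integral_mono_on (by norm_num) (hcontJ (9/4) (by norm_num))
        · apply ContinuousOn.intervalIntegrable
          apply ContinuousOn.rpow_const continuousOn_id
          intro y hy
          rw [Set.uIcc_of_le (by norm_num : (1:ℝ) ≤ 9/4)] at hy
          left; simp only [id]; linarith [hy.1]
        · intro y hy
          have hy1 : 1 ≤ y := hy.1
          have hy0 : 0 < y := by linarith
          have heq : 1 / Real.sqrt (y ^ 3) = y ^ (-(3:ℝ)/2) := by
            rw [Real.sqrt_eq_rpow, ← Real.rpow_natCast y 3, ← Real.rpow_mul hy0.le,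
              show (-(3:ℝ)/2) = -(((3:ℕ):ℝ) * (1/2)) by norm_num, Real.rpow_neg hy0.le, one_div]
          calc 1 / Real.sqrt (1 + y ^ 3) ≤ 1 / Real.sqrt (y ^ 3) := by
                apply one_div_le_one_div_of_le (Real.sqrt_pos.mpr (by positivity))
                apply Real.sqrt_le_sqrt; linarith
            _ = y ^ (-(3:ℝ)/2) := heq
      have hcomp : (∫ y in (1:ℝ)..(9/4), y ^ (-(3:ℝ)/2)) = 2/3 := by
        rw [integral_rpow]
        · have h94 : ((9:ℝ)/4) ^ (-(3:ℝ)/2 + 1) = 2/3 := by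
            have : (-(3:ℝ)/2 + 1) = -(1/2) := by norm_num
            rw [this, Real.rpow_neg (by norm_num), show ((9:ℝ)/4) = (3/2)^(2:ℕ) by norm_num,
              ← Real.rpow_natCast ((3:ℝ)/2) 2, ← Real.rpow_mul (by norm_num)]
            norm_num
          rw [h94, Real.one_rpow]
          norm_num
        · right
          constructor
          · norm_num
          · rw [Set.uIcc_of_le (by norm_num : (1:ℝ) ≤ 9/4)]
            intro h; simp at h; linarith [h.1]
      have hk23 : (3:ℝ)/2 ≤ k₂ := by
        have h1 : 1 / k₂ ≤ 2/3 := by rw [hk₂]; rw [← hcomp]; exact hJle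
        rw [div_le_iff₀ hk₂pos] at h1
        linarith
      have hsqlt : Real.sqrt q < 3/2 := by
        have : Real.sqrt q < Real.sqrt (9/4) := by
          apply Real.sqrt_lt_sqrt hq0.le hcase
        rwa [show ((9:ℝ)/4) = (3/2)^2 by norm_num, Real.sqrt_sq (by norm_num)] at this
      have hs1le : Real.sqrt (1 - Ω) ≤ 1 := Real.sqrt_le_one.mpr (by linarith)
      have : (3:ℝ)/2 ≤ k₂ / Real.sqrt (1 - Ω) := by
        rw [le_div_iff₀ hs10]
        nlinarith
      linarith
  refine ⟨main, ?_⟩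
  have hq_eq : q = Real.sqrt q ^ 2 := (Real.sq_sqrt hq0.le).symm
  have h2 : Real.sqrt q ^ 2 ≤ (k₂ / Real.sqrt (1 - Ω)) ^ 2 := by
    apply pow_le_pow_left₀ (Real.sqrt_nonneg q) main
  rw [hq_eq]
  refine h2.trans (le_of_eq ?_)
  rw [div_pow, Real.sq_sqrt hΩpos.le]
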